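/- Under the unconstrained symmetric Cournot equilibrium with linear prices, the total quantity traded at each time t by n stores is 2n/(n+1) times the quantity traded by a single monopolist store, and in particular exceeds the monopoly (cooperative) quantity for all n ≥ 2, while the total profit 4n/(n+1)² times monopoly profit converges to 0 as n → ∞. -/
import Mathlib


/-- `hfun ε x`: volume traded, `x` when buying, `ε x` when selling. -/
noncomputable def hfun (ε x : ℝ) : ℝ := if 0 ≤ x then x else ε * x

/-- The objective of the unconstrained symmetric `n`-store problem. -/
noncomputable def symObj (T n : ℕ) (pbar p' : ℕ → ℝ) (ε : ℝ) (x : ℕ → ℝ) : ℝ :=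
  ∑ t ∈ Finset.Icc 1 T,
    (pbar t * hfun ε (x t) + ((n : ℝ) + 1) / 2 * p' t * (hfun ε (x t)) ^ 2)

lemma hfun_smul (ε l x : ℝ) (hl : 0 ≤ l) : hfun ε (l * x) = l * hfun ε x := by
  rcases eq_or_lt_of_le hl with h | h
  · simp [hfun, ← h]
  · unfold hfun
    by_cases hx : 0 ≤ x
    · rw [if_pos hx, if_pos (by positivity)]
    · push_neg at hx
      rw [if_neg (by push_neg; nlinarith), if_neg (by push_neg; exact hx)]
      ring

lemma gmid_strict (pb c ε x y : ℝ) (hpb : 0 < pb) (hc : 0 < c) (hε0 : 0 < ε) (hε1 : ε ≤ 1)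
    (hxy : x ≠ y) :
    pb * hfun ε ((x + y) / 2) + c * (hfun ε ((x + y) / 2)) ^ 2 <
      ((pb * hfun ε x + c * (hfun ε x) ^ 2) + (pb * hfun ε y + c * (hfun ε y) ^ 2)) / 2 := by
  have hne : (0:ℝ) < (x - y) ^ 2 := by
    have : x - y ≠ 0 := sub_ne_zero.mpr hxy
    positivity
  have he2 : (0:ℝ) < ε ^ 2 := by positivity
  unfold hfun
  rcases le_or_gt 0 x with hx | hx <;> rcases le_or_gt 0 y with hy | hy
  · rw [if_pos hx, if_pos hy, if_pos (by linarith : (0:ℝ) ≤ (x+y)/2)]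
    nlinarith
  · rw [if_pos hx, if_neg (not_le.mpr hy)]
    rcases le_or_gt 0 ((x+y)/2) with hm | hm
    · rw [if_pos hm]
      have h1 : 0 ≤ (-y) * (y + 2*x) := mul_nonneg (by linarith) (by linarith)
      have h2 : 0 < ε^2 * y^2 := mul_pos he2 (by nlinarith)
      have h3 : 0 ≤ (1 - ε) * (-y) := mul_nonneg (by linarith) (by linarith)
      nlinarith [mul_pos hc h2, mul_nonneg hc.le h1, mul_nonneg hpb.le h3]
    · rw [if_neg (not_le.mpr hm)]
      have h2 : 0 < ε^2 * y^2 := mul_pos he2 (by nlinarith)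
      have h1 : 0 ≤ x * (-y) := mul_nonneg hx (by linarith)
      have h3 : 0 ≤ (1 - ε) * x := mul_nonneg (by linarith) hx
      nlinarith [mul_pos hc h2, mul_nonneg hc.le h1, mul_nonneg hpb.le h3,
        mul_nonneg (mul_nonneg hc.le he2.le) h1, sq_nonneg x, mul_nonneg hc.le (sq_nonneg x)]
  · rw [if_neg (not_le.mpr hx), if_pos hy]
    rcases le_or_gt 0 ((x+y)/2) with hm | hm
    · rw [if_pos hm]
      have h1 : 0 ≤ (-x) * (x + 2*y) := mul_nonneg (by linarith) (by linarith)
      have h2 : 0 < ε^2 * x^2 := mul_pos he2 (by nlinarith)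
      have h3 : 0 ≤ (1 - ε) * (-x) := mul_nonneg (by linarith) (by linarith)
      nlinarith [mul_pos hc h2, mul_nonneg hc.le h1, mul_nonneg hpb.le h3]
    · rw [if_neg (not_le.mpr hm)]
      have h2 : 0 < ε^2 * x^2 := mul_pos he2 (by nlinarith)
      have h1 : 0 ≤ y * (-x) := mul_nonneg hy (by linarith)
      have h3 : 0 ≤ (1 - ε) * y := mul_nonneg (by linarith) hy
      nlinarith [mul_pos hc h2, mul_nonneg hc.le h1, mul_nonneg hpb.le h3,
        mul_nonneg (mul_nonneg hc.le he2.le) h1, mul_nonneg hc.le (sq_nonneg y)]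
  · rw [if_neg (not_le.mpr hx), if_neg (not_le.mpr hy),
      if_neg (not_le.mpr (by linarith : (x+y)/2 < 0))]
    nlinarith [mul_pos (mul_pos hc he2) hne]

lemma gmid_le (pb c ε x y : ℝ) (hpb : 0 < pb) (hc : 0 < c) (hε0 : 0 < ε) (hε1 : ε ≤ 1) :
    pb * hfun ε ((x + y) / 2) + c * (hfun ε ((x + y) / 2)) ^ 2 ≤
      ((pb * hfun ε x + c * (hfun ε x) ^ 2) + (pb * hfun ε y + c * (hfun ε y) ^ 2)) / 2 := by
  by_cases hxy : x = y
  · subst hxy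
    have : (x + x) / 2 = x := by ring
    rw [this]; ring_nf; rfl
  · exact (gmid_strict pb c ε x y hpb hc hε0 hε1 hxy).le

lemma symObj_scale (T n : ℕ) (pbar p' : ℕ → ℝ) (ε : ℝ) (x : ℕ → ℝ) :
    symObj T n pbar p' ε (fun t => (2 / ((n:ℝ) + 1)) * x t)
      = (2 / ((n:ℝ) + 1)) * symObj T 1 pbar p' ε x := by
  have hn : ((n:ℝ) + 1) ≠ 0 := by positivity
  unfold symObj
  rw [Finset.mul_sum]
  refine Finset.sum_congr rfl fun t _ => ?_
  rw [hfun_smul ε _ (x t) (by positivity)]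
  push_cast
  field_simp
  ring


/-- at the unconstrained symmetric Cournot equilibrium with
linear prices, the total quantity traded at each time by `n` stores is
`2n/(n+1)` times the single-store (monopoly) quantity — in particular it
exceeds the monopoly quantity in magnitude for `n ≥ 2` whenever the monopoly
quantity is nonzero — while the total profit, `4n/(n+1)²` times the monopoly
profit, converges to `0` as `n → ∞`. -/
theorem stmt18 (T : ℕ) (hT : 1 ≤ T) (pbar p' : ℕ → ℝ)
    (hpbar : ∀ t, 1 ≤ t → t ≤ T → 0 < pbar t) (hp' : ∀ t, 1 ≤ t → t ≤ T → 0 < p' t)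
    (ε : ℝ) (hε0 : 0 < ε) (hε1 : ε ≤ 1)
    (xf : ℕ → ℕ → ℝ)
    (hcyc : ∀ n : ℕ, 1 ≤ n → ∑ t ∈ Finset.Icc 1 T, xf n t = 0)
    (hmin : ∀ n : ℕ, 1 ≤ n → ∀ y : ℕ → ℝ, (∑ t ∈ Finset.Icc 1 T, y t = 0) →
      symObj T n pbar p' ε (xf n) ≤ symObj T n pbar p' ε y) :
    -- total traded quantity is 2n/(n+1) times the monopoly quantity
    (∀ n : ℕ, 1 ≤ n → ∀ t, 1 ≤ t → t ≤ T →
      (n : ℝ) * xf n t = (2 * (n : ℝ) / ((n : ℝ) + 1)) * xf 1 t) ∧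
    -- the total traded quantity strictly exceeds the monopoly quantity for n ≥ 2
    (∀ n : ℕ, 2 ≤ n → ∀ t, 1 ≤ t → t ≤ T → xf 1 t ≠ 0 →
      |xf 1 t| < |(n : ℝ) * xf n t|) ∧
    -- total profit equals 4n/(n+1)² times the monopoly profit
    (∀ n : ℕ, 1 ≤ n →
      (n : ℝ) * ∑ t ∈ Finset.Icc 1 T, p' t * (hfun ε (xf n t)) ^ 2 =
        (4 * (n : ℝ) / ((n : ℝ) + 1) ^ 2) *
          ∑ t ∈ Finset.Icc 1 T, p' t * (hfun ε (xf 1 t)) ^ 2) ∧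
    -- and the total profit tends to 0 as n → ∞
    Filter.Tendsto
      (fun n : ℕ => (n : ℝ) * ∑ t ∈ Finset.Icc 1 T, p' t * (hfun ε (xf n t)) ^ 2)
      Filter.atTop (nhds 0) := by
  -- key: xf n t = (2/(n+1)) * xf 1 t on Icc 1 T
  have key : ∀ n : ℕ, 1 ≤ n → ∀ t ∈ Finset.Icc 1 T,
      xf n t = (2 / ((n:ℝ) + 1)) * xf 1 t := by
    intro n hn
    set l : ℝ := 2 / ((n:ℝ) + 1) with hl
    have hlpos : 0 < l := by positivity
    have hn1 : ((n:ℝ) + 1) ≠ 0 := by positivity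
    set b : ℕ → ℝ := fun t => l * xf 1 t with hb
    have hbcyc : ∑ t ∈ Finset.Icc 1 T, b t = 0 := by
      simp only [hb, ← Finset.mul_sum, hcyc 1 le_rfl, mul_zero]
    -- F n a ≤ F n b
    have h1 : symObj T n pbar p' ε (xf n) ≤ symObj T n pbar p' ε b :=
      hmin n hn b hbcyc
    -- F n b ≤ F n a
    have hrepr : xf n = fun t => l * ((1/l) * xf n t) := by
      funext t; field_simp
    have h2 : symObj T n pbar p' ε b ≤ symObj T n pbar p' ε (xf n) := by
      have e1 : symObj T n pbar p' ε b = l * symObj T 1 pbar p' ε (xf 1) :=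
        symObj_scale T n pbar p' ε (xf 1)
      have e2 : symObj T n pbar p' ε (xf n)
          = l * symObj T 1 pbar p' ε (fun t => (1/l) * xf n t) := by
        conv_lhs => rw [hrepr]
        exact symObj_scale T n pbar p' ε _
      have h3 : symObj T 1 pbar p' ε (xf 1)
          ≤ symObj T 1 pbar p' ε (fun t => (1/l) * xf n t) := by
        apply hmin 1 le_rfl
        rw [← Finset.mul_sum, hcyc n hn, mul_zero]
      rw [e1, e2]
      exact mul_le_mul_of_nonneg_left h3 hlpos.le
    have heq : symObj T n pbar p' ε b = symObj T n pbar p' ε (xf n) := le_antisymm h2 h1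
    -- midpoint argument
    by_contra hcon
    push_neg at hcon
    obtain ⟨t0, ht0, hne0⟩ := hcon
    set m : ℕ → ℝ := fun t => (xf n t + b t) / 2 with hm
    have hmcyc : ∑ t ∈ Finset.Icc 1 T, m t = 0 := by
      simp only [hm]
      rw [← Finset.sum_div, Finset.sum_add_distrib, hcyc n hn, hbcyc]
      norm_num
    have hlt : symObj T n pbar p' ε m < symObj T n pbar p' ε (xf n) := by
      have hsum : symObj T n pbar p' ε m <
          ∑ t ∈ Finset.Icc 1 T,
            (((pbar t * hfun ε (xf n t) + ((n:ℝ)+1)/2 * p' t * (hfun ε (xf n t))^2)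
              + (pbar t * hfun ε (b t) + ((n:ℝ)+1)/2 * p' t * (hfun ε (b t))^2)) / 2) := by
        unfold symObj
        apply Finset.sum_lt_sum
        · intro t ht
          rw [Finset.mem_Icc] at ht
          exact gmid_le (pbar t) (((n:ℝ)+1)/2 * p' t) ε (xf n t) (b t)
            (hpbar t ht.1 ht.2) (by have := hp' t ht.1 ht.2; positivity) hε0 hε1
        · refine ⟨t0, ht0, ?_⟩
          rw [Finset.mem_Icc] at ht0
          exact gmid_strict (pbar t0) (((n:ℝ)+1)/2 * p' t0) ε (xf n t0) (b t0)
            (hpbar t0 ht0.1 ht0.2) (by have := hp' t0 ht0.1 ht0.2; positivity) hε0 hε1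
            (fun h => hne0 h)
      calc symObj T n pbar p' ε m < _ := hsum
        _ = (symObj T n pbar p' ε (xf n) + symObj T n pbar p' ε b) / 2 := by
            unfold symObj; rw [← Finset.sum_add_distrib, Finset.sum_div]
        _ = symObj T n pbar p' ε (xf n) := by rw [heq]; ring
    exact absurd (hmin n hn m hmcyc) (not_le.mpr hlt)
  -- the monopoly profit sum
  set S : ℝ := ∑ t ∈ Finset.Icc 1 T, p' t * (hfun ε (xf 1 t)) ^ 2 with hS
  have part1 : ∀ n : ℕ, 1 ≤ n → ∀ t, 1 ≤ t → t ≤ T →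
      (n : ℝ) * xf n t = (2 * (n : ℝ) / ((n : ℝ) + 1)) * xf 1 t := by
    intro n hn t ht1 ht2
    have := key n hn t (Finset.mem_Icc.mpr ⟨ht1, ht2⟩)
    rw [this]; ring
  have part3 : ∀ n : ℕ, 1 ≤ n →
      (n : ℝ) * ∑ t ∈ Finset.Icc 1 T, p' t * (hfun ε (xf n t)) ^ 2 =
        (4 * (n : ℝ) / ((n : ℝ) + 1) ^ 2) * S := by
    intro n hn
    have hn1 : ((n:ℝ) + 1) ≠ 0 := by positivity
    have : ∑ t ∈ Finset.Icc 1 T, p' t * (hfun ε (xf n t)) ^ 2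
        = (2 / ((n:ℝ)+1))^2 * S := by
      rw [hS, Finset.mul_sum]
      refine Finset.sum_congr rfl fun t ht => ?_
      rw [key n hn t ht, hfun_smul ε _ _ (by positivity)]
      ring
    rw [this]
    field_simp
    ring
  refine ⟨part1, ?_, part3, ?_⟩
  · intro n hn t ht1 ht2 hx
    have h := part1 n (le_trans one_le_two hn) t ht1 ht2
    rw [h, abs_mul]
    have hn2 : (2:ℝ) ≤ (n:ℝ) := by exact_mod_cast hn
    have h1 : 1 < |2 * (n:ℝ) / ((n:ℝ) + 1)| := by
      rw [abs_of_pos (by positivity)]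
      rw [lt_div_iff₀ (by positivity)]
      linarith
    have h2 : 0 < |xf 1 t| := abs_pos.mpr hx
    nlinarith
  · have hev : ∀ᶠ n : ℕ in Filter.atTop,
        (n : ℝ) * ∑ t ∈ Finset.Icc 1 T, p' t * (hfun ε (xf n t)) ^ 2
          = (4 * (n : ℝ) / ((n : ℝ) + 1) ^ 2) * S := by
      filter_upwards [Filter.eventually_ge_atTop 1] with n hn
      exact part3 n hn
    rw [Filter.tendsto_congr' hev]
    have hmain : Filter.Tendsto (fun n : ℕ => 4 * (n:ℝ) / ((n:ℝ) + 1) ^ 2)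
        Filter.atTop (nhds 0) := by
      apply squeeze_zero (fun n => by positivity) (g := fun n : ℕ => 4 / (n:ℝ))
      · intro n
        rcases Nat.eq_zero_or_pos n with h | h
        · subst h; norm_num
        · have hn0 : (0:ℝ) < (n:ℝ) := by exact_mod_cast h
          rw [div_le_div_iff₀ (by positivity) hn0]
          nlinarith
      · exact tendsto_const_div_atTop_nhds_zero_nat 4
    have := hmain.mul_const S
    simpa using this
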